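/- Let k be a field of characteristic zero and set f = X·(X·Y−1) ∈ k[X,Y]. There is a k-algebra isomorphism φ from the localization k[X,Y][1/f] onto the Laurent polynomial ring in two variables over k (the monoid algebra of ℤ × ℤ over k) such that φ sends the image of X to the first standard Laurent generator and the image of f to the second standard Laurent generator. (Equivalently, the generic fiber of Broughton's map is isomorphic to 𝔾_{m,k} × 𝔾_{m,k}.) -/

import Mathlib

open MvPolynomial

namespace BroughtonAux

set_option linter.unusedSectionVars false

noncomputable section

variable (k : Type) [Field k] [CharZero k]

abbrev R := MvPolynomial (Fin 2) k

abbrev f : R k := X 0 * (X 0 * X 1 - 1)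

abbrev S := Localization.Away (f k)

abbrev L := AddMonoidAlgebra k (ℤ × ℤ)

/-- The canonical group of units `single a 1` in the Laurent polynomial ring. -/
def U : Multiplicative (ℤ × ℤ) →* (L k)ˣ where
  toFun p := ⟨AddMonoidAlgebra.single p.toAdd 1, AddMonoidAlgebra.single (-p.toAdd) 1,
    by rw [AddMonoidAlgebra.single_mul_single]; simp [AddMonoidAlgebra.one_def],
    by rw [AddMonoidAlgebra.single_mul_single]; simp [AddMonoidAlgebra.one_def]⟩
  map_one' := by ext; simp [AddMonoidAlgebra.one_def]
  map_mul' a b := by ext; simp [AddMonoidAlgebra.single_mul_single]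

lemma U_val (p : ℤ × ℤ) : (U k (Multiplicative.ofAdd p) : L k) = AddMonoidAlgebra.single p 1 := rfl

/-- The forward map on polynomials: `X ↦ u`, `Y ↦ (v + u) u⁻²`. -/
def p : R k →ₐ[k] L k :=
  aeval ![(U k (Multiplicative.ofAdd ((1 : ℤ), (0 : ℤ))) : L k),
    ((U k (Multiplicative.ofAdd ((0 : ℤ), (1 : ℤ))) : L k) +
      (U k (Multiplicative.ofAdd ((1 : ℤ), (0 : ℤ))) : L k)) *
      (U k (Multiplicative.ofAdd ((-2 : ℤ), (0 : ℤ))) : L k)]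

lemma p_X0 : p k (X 0) = AddMonoidAlgebra.single ((1 : ℤ), (0 : ℤ)) 1 := by
  simp [p, U_val]

lemma p_X1 : p k (X 1) =
    (AddMonoidAlgebra.single ((0 : ℤ), (1 : ℤ)) 1 + AddMonoidAlgebra.single ((1 : ℤ), (0 : ℤ)) 1) *
      AddMonoidAlgebra.single ((-2 : ℤ), (0 : ℤ)) 1 := by
  simp [p, U_val]

lemma p_f : p k (f k) = AddMonoidAlgebra.single ((0 : ℤ), (1 : ℤ)) 1 := by
  simp only [f, p, map_mul, map_sub, map_one, aeval_X]
  simp only [Matrix.cons_val_zero, Matrix.cons_val_one, Matrix.head_cons]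
  rw [U_val, U_val, U_val]
  simp only [mul_sub, mul_one, mul_add, add_mul, AddMonoidAlgebra.single_mul_single]
  norm_num

/-- `X 0` as a unit of the localization. -/
def xu : (S k)ˣ :=
  Units.mkOfMulEqOne (algebraMap (R k) (S k) (X 0))
    (algebraMap (R k) (S k) (X 0 * X 1 - 1) * IsLocalization.Away.invSelf (f k))
    (by rw [← mul_assoc, ← map_mul]; exact IsLocalization.Away.mul_invSelf _)

lemma xu_val : (xu k : S k) = algebraMap (R k) (S k) (X 0) := rfl

/-- `f` as a unit of the localization. -/
def fu : (S k)ˣ :=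
  Units.mkOfMulEqOne (algebraMap (R k) (S k) (f k)) (IsLocalization.Away.invSelf (f k))
    (IsLocalization.Away.mul_invSelf _)

lemma fu_val : (fu k : S k) = algebraMap (R k) (S k) (f k) := rfl

/-- The backward map on exponents: `(m, n) ↦ x^m f^n`. -/
def g : Multiplicative (ℤ × ℤ) →* (S k)ˣ where
  toFun q := xu k ^ q.toAdd.1 * fu k ^ q.toAdd.2
  map_one' := by simp
  map_mul' a b := by
    simp only [toAdd_mul, Prod.fst_add, Prod.snd_add, zpow_add]
    exact mul_mul_mul_comm _ _ _ _

/-- The backward algebra map. -/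
def β : L k →ₐ[k] S k :=
  AddMonoidAlgebra.lift k (S k) (ℤ × ℤ) ((Units.coeHom (S k)).comp (g k))

lemma β_single (q : ℤ × ℤ) :
    β k (AddMonoidAlgebra.single q 1) = ((xu k ^ q.1 * fu k ^ q.2 : (S k)ˣ) : S k) := by
  simp [β, g]

lemma hpf_isUnit : IsUnit ((p k).toRingHom (f k)) := by
  show IsUnit (p k (f k))
  rw [p_f, ← U_val]
  exact (U k (Multiplicative.ofAdd ((0 : ℤ), (1 : ℤ)))).isUnit

/-- The forward algebra map. -/
def α : S k →ₐ[k] L k where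
  toRingHom := IsLocalization.Away.lift (f k) (g := (p k).toRingHom) (hpf_isUnit k)
  commutes' c := by
    have h1 : algebraMap k (S k) c = algebraMap (R k) (S k) (algebraMap k (R k) c) :=
      (IsScalarTower.algebraMap_apply k (R k) (S k) c)
    rw [RingHom.toMonoidHom_eq_coe, OneHom.toFun_eq_coe, MonoidHom.toOneHom_coe,
      MonoidHom.coe_coe, h1, IsLocalization.Away.lift_eq]
    exact (p k).commutes c

lemma α_algebraMap (r : R k) : α k (algebraMap (R k) (S k) r) = p k r :=
  IsLocalization.Away.lift_eq (f k) (hpf_isUnit k) r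

lemma αM_xu : Units.map (α k : S k →* L k) (xu k) =
    U k (Multiplicative.ofAdd ((1 : ℤ), (0 : ℤ))) :=
  Units.ext (show α k (algebraMap (R k) (S k) (X 0)) = _ by
    rw [α_algebraMap, p_X0, U_val])

lemma αM_fu : Units.map (α k : S k →* L k) (fu k) =
    U k (Multiplicative.ofAdd ((0 : ℤ), (1 : ℤ))) :=
  Units.ext (show α k (algebraMap (R k) (S k) (f k)) = _ by
    rw [α_algebraMap, p_f, U_val])

lemma ofAdd_pow_mul (q : ℤ × ℤ) :
    (Multiplicative.ofAdd ((1 : ℤ), (0 : ℤ))) ^ q.1 *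
      (Multiplicative.ofAdd ((0 : ℤ), (1 : ℤ))) ^ q.2 = Multiplicative.ofAdd q := by
  apply Multiplicative.toAdd.injective
  simp [Prod.ext_iff]

lemma comp1 : (α k).comp (β k) = AlgHom.id k (L k) := by
  apply AddMonoidAlgebra.algHom_ext
  intro q
  rw [AlgHom.coe_comp, Function.comp_apply, β_single, AlgHom.coe_id, id_eq]
  have h : (α k) ((xu k ^ q.1 * fu k ^ q.2 : (S k)ˣ) : S k) =
      ((Units.map (α k : S k →* L k) (xu k ^ q.1 * fu k ^ q.2) : (L k)ˣ) : L k) := rfl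
  have h1 : (U k (Multiplicative.ofAdd ((1 : ℤ), (0 : ℤ)))) ^ q.1 =
      U k ((Multiplicative.ofAdd ((1 : ℤ), (0 : ℤ))) ^ q.1) := (map_zpow (U k) _ _).symm
  have h2 : (U k (Multiplicative.ofAdd ((0 : ℤ), (1 : ℤ)))) ^ q.2 =
      U k ((Multiplicative.ofAdd ((0 : ℤ), (1 : ℤ))) ^ q.2) := (map_zpow (U k) _ _).symm
  rw [h, map_mul, map_zpow, map_zpow, αM_xu, αM_fu, h1, h2, ← map_mul, ofAdd_pow_mul, U_val]
  exact Subsingleton.elim _ _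

lemma comp2 : (β k).comp (α k) = AlgHom.id k (S k) := by
  apply AlgHom.coe_ringHom_injective
  apply IsLocalization.ringHom_ext (Submonoid.powers (f k))
  apply MvPolynomial.ringHom_ext
  · intro a
    simp only [RingHom.coe_comp, Function.comp_apply, AlgHom.toRingHom_eq_coe, RingHom.coe_coe,
      AlgHom.coe_id, id_eq]
    rw [show (C a : R k) = algebraMap k (R k) a from rfl,
      ← IsScalarTower.algebraMap_apply k (R k) (S k) a]
    exact ((β k).comp (α k)).commutes a
  · intro i
    simp only [RingHom.coe_comp, Function.comp_apply, AlgHom.toRingHom_eq_coe, RingHom.coe_coe,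
      AlgHom.coe_id, id_eq]
    fin_cases i
    · -- X 0
      show (β k) ((α k) ((algebraMap (R k) (S k)) (X 0))) = (algebraMap (R k) (S k)) (X 0)
      rw [α_algebraMap, p_X0, β_single]
      simp [xu_val]
    · -- X 1
      show (β k) ((α k) ((algebraMap (R k) (S k)) (X 1))) = (algebraMap (R k) (S k)) (X 1)
      rw [α_algebraMap, p_X1, map_mul, map_add, β_single, β_single, β_single]
      simp only [zpow_zero, zpow_one, one_mul, mul_one]
      have key : (fu k : S k) + (xu k : S k) =
          algebraMap (R k) (S k) (X 1) * ((xu k ^ (2 : ℤ) : (S k)ˣ) : S k) := by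
        have hx2 : ((xu k ^ (2 : ℤ) : (S k)ˣ) : S k) = algebraMap (R k) (S k) (X 0 ^ 2) := by
          rw [show (2 : ℤ) = ((2 : ℕ) : ℤ) from rfl, zpow_natCast, Units.val_pow_eq_pow_val,
            xu_val, map_pow]
        rw [hx2, fu_val, xu_val, ← map_add, ← map_mul]
        congr 1
        ring
      calc ((fu k : S k) + (xu k : S k)) * ((xu k ^ (-2 : ℤ) : (S k)ˣ) : S k)
          = algebraMap (R k) (S k) (X 1) *
            (((xu k ^ (2 : ℤ) * xu k ^ (-2 : ℤ) : (S k)ˣ) : S k)) := by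
            rw [key, Units.val_mul, mul_assoc]
        _ = algebraMap (R k) (S k) (X 1) := by
            rw [← zpow_add]
            norm_num

end

end BroughtonAux

/-- The generic fiber of Broughton's map is a two-dimensional torus: there is a `k`-algebra
isomorphism `k[X,Y][1/f] ≅ k[ℤ × ℤ]` (Laurent polynomials in two variables) sending the image
of `X` to the first standard Laurent generator and the image of `f = X(XY−1)` to the second. -/
theorem stmt_2 (k : Type) [Field k] [CharZero k] :
    ∃ φ : Localization.Away (X 0 * (X 0 * X 1 - 1) : MvPolynomial (Fin 2) k) ≃ₐ[k]
        AddMonoidAlgebra k (ℤ × ℤ),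
      φ (algebraMap (MvPolynomial (Fin 2) k)
          (Localization.Away (X 0 * (X 0 * X 1 - 1) : MvPolynomial (Fin 2) k)) (X 0)) =
        AddMonoidAlgebra.single ((1 : ℤ), (0 : ℤ)) 1 ∧
      φ (algebraMap (MvPolynomial (Fin 2) k)
          (Localization.Away (X 0 * (X 0 * X 1 - 1) : MvPolynomial (Fin 2) k))
          (X 0 * (X 0 * X 1 - 1))) =
        AddMonoidAlgebra.single ((0 : ℤ), (1 : ℤ)) 1 := by
  refine ⟨AlgEquiv.ofAlgHom (BroughtonAux.α k) (BroughtonAux.β k)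
    (BroughtonAux.comp1 k) (BroughtonAux.comp2 k), ?_, ?_⟩
  · exact (BroughtonAux.α_algebraMap k (X 0)).trans (BroughtonAux.p_X0 k)
  · exact (BroughtonAux.α_algebraMap k _).trans (BroughtonAux.p_f k)
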